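/- Let C > 1, q > 1, α ∈ (1 − C^{−1/(q−1)}, 1), and let a ∈ (0,1) satisfy C(αa + 1 − α)^q = αC·a^q + (1 − α). Define C' = ((1 − C·a^q)^q·(q−1)^{q−1}) / ((1 − a)·(a − C·a^q)^{q−1}·q^q). Consider the segment in ℝ² from x = (a, C·a^q) to y = (1, 1). Then the maximum of t₂/t₁^q over points (t₁,t₂) on this segment equals C', attained at an interior point, and in particular C' > C. -/

import Mathlib

open Set Real

lemma tangent_lt' {q x y : ℝ} (hq : 1 < q) (hx : 0 < x) (hy : 0 ≤ y) (hxy : y ≠ x) :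
    x ^ q + q * x ^ (q - 1) * (y - x) < y ^ q := by
  have hs : -1 ≤ (y - x) / x := by
    rw [le_div_iff₀ hx]; linarith
  have hs' : (y - x) / x ≠ 0 := div_ne_zero (sub_ne_zero.mpr hxy) hx.ne'
  have h := one_add_mul_self_lt_rpow_one_add hs hs' hq
  have h1 : 1 + (y - x) / x = y / x := by field_simp; ring
  rw [h1, Real.div_rpow hy hx.le, lt_div_iff₀ (rpow_pos_of_pos hx q)] at h
  have h2 : x ^ (q - 1) = x ^ q / x := by rw [Real.rpow_sub hx, Real.rpow_one]
  rw [h2]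
  calc x ^ q + q * (x ^ q / x) * (y - x) = (1 + q * ((y - x) / x)) * x ^ q := by
        field_simp
    _ < y ^ q := h

lemma tangent_le' {q x y : ℝ} (hq : 1 < q) (hx : 0 < x) (hy : 0 ≤ y) :
    x ^ q + q * x ^ (q - 1) * (y - x) ≤ y ^ q := by
  rcases eq_or_ne y x with rfl | hxy
  · simp
  · exact (tangent_lt' hq hx hy hxy).le

set_option maxHeartbeats 1600000 in
theorem stmt12 (C q α a : ℝ) (hC : 1 < C) (hq : 1 < q)
    (hα : α ∈ Set.Ioo (1 - C ^ (-(1 / (q - 1)))) 1)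
    (ha : a ∈ Set.Ioo (0 : ℝ) 1)
    (hroot : C * (α * a + 1 - α) ^ q = α * C * a ^ q + (1 - α))
    (C' : ℝ)
    (hC' : C' = ((1 - C * a ^ q) ^ q * (q - 1) ^ (q - 1)) /
      ((1 - a) * (a - C * a ^ q) ^ (q - 1) * q ^ q)) :
    IsGreatest ((fun p : ℝ × ℝ => p.2 / p.1 ^ q) ''
        segment ℝ ((a, C * a ^ q) : ℝ × ℝ) ((1, 1) : ℝ × ℝ)) C' ∧
    (∃ p ∈ openSegment ℝ ((a, C * a ^ q) : ℝ × ℝ) ((1, 1) : ℝ × ℝ),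
        p.2 / p.1 ^ q = C') ∧
    C < C' := by
  obtain ⟨ha0, ha1⟩ := ha
  obtain ⟨hαl, hα1⟩ := hα
  have hq0 : (0 : ℝ) < q - 1 := by linarith
  have h1a : (0 : ℝ) < 1 - a := by linarith
  have hα0 : 0 < α := by
    have h := rpow_lt_one_of_one_lt_of_neg hC (neg_lt_zero.mpr (div_pos one_pos hq0))
    linarith
  obtain ⟨b, hb⟩ : ∃ b : ℝ, b = C * a ^ q := ⟨_, rfl⟩
  rw [← hb] at hC' ⊢
  have haq : (0 : ℝ) < a ^ q := rpow_pos_of_pos ha0 q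
  have hb0 : 0 < b := by rw [hb]; exact mul_pos (by linarith) haq
  obtain ⟨m, hm⟩ : ∃ m : ℝ, m = α * a + 1 - α := ⟨_, rfl⟩
  have hroot' : C * m ^ q = α * b + (1 - α) := by
    rw [hm, hb, hroot]; ring
  have ham : a < m := by
    rw [hm]
    nlinarith [mul_pos (show (0:ℝ) < 1 - α by linarith) h1a]
  have hm1 : m < 1 := by
    rw [hm]
    nlinarith [mul_pos hα0 h1a]
  have hm0 : 0 < m := ha0.trans ham
  have hCm : C * m ^ q = b + (1 - b) / (1 - a) * (m - a) := by
    rw [hroot', hm]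
    field_simp
    ring
  have hqa : a ^ (q - 1) = a ^ q / a := by rw [Real.rpow_sub ha0, Real.rpow_one]
  have ht := tangent_lt' hq ha0 hm0.le (ne_of_gt ham)
  have h4 : b + q * (b / a) * (m - a) < C * m ^ q := by
    have h5 := (mul_lt_mul_iff_right₀ (show (0:ℝ) < C by linarith)).2 ht
    rw [hqa] at h5
    calc b + q * (b / a) * (m - a)
        = C * (a ^ q + q * (a ^ q / a) * (m - a)) := by rw [hb]; field_simp
      _ < C * m ^ q := h5
  have hk : q * (b / a) < (1 - b) / (1 - a) := by
    rw [hCm] at h4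
    have h5 : q * (b / a) * (m - a) < (1 - b) / (1 - a) * (m - a) := by linarith
    exact (mul_lt_mul_iff_left₀ (show (0:ℝ) < m - a by linarith)).1 h5
  have h1 : q * b * (1 - a) < a * (1 - b) := by
    have hk' : q * b / a < (1 - b) / (1 - a) := by
      rw [← mul_div_assoc] at hk; exact hk
    rw [div_lt_div_iff₀ ha0 h1a] at hk'
    linarith
  have hba : b < a := by
    nlinarith [h1, mul_pos hq0 (mul_pos hb0 h1a)]
  have hb1 : b < 1 := by linarith
  have hkq : 1 - b < q * (1 - a) := by
    have hB := one_add_mul_self_lt_rpow_one_add (show (-1:ℝ) ≤ a - 1 by linarith)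
      (show a - 1 ≠ 0 by intro h; linarith) hq
    rw [show (1:ℝ) + (a - 1) = a by ring] at hB
    have hab' : a ^ q < b := by
      rw [hb]
      nlinarith [haq]
    nlinarith [hab']
  have hab : 0 < a - b := by linarith
  have h1b : 0 < 1 - b := by linarith
  obtain ⟨t1, hT1⟩ : ∃ t1 : ℝ, t1 = q * (a - b) / ((1 - b) * (q - 1)) := ⟨_, rfl⟩
  obtain ⟨t2, hT2⟩ : ∃ t2 : ℝ, t2 = (a - b) / ((1 - a) * (q - 1)) := ⟨_, rfl⟩
  have ht1pos : 0 < t1 := by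
    rw [hT1]; exact div_pos (mul_pos (by linarith) hab) (mul_pos h1b hq0)
  have ht2pos : 0 < t2 := by
    rw [hT2]; exact div_pos hab (mul_pos h1a hq0)
  have ht1a : a < t1 := by
    rw [hT1, lt_div_iff₀ (mul_pos h1b hq0)]
    linarith [h1]
  have ht11 : t1 < 1 := by
    rw [hT1, div_lt_one (mul_pos h1b hq0)]
    linarith [hkq]
  have hlink : t2 = b + (1 - b) / (1 - a) * (t1 - a) := by
    rw [hT1, hT2]
    field_simp [h1a.ne', h1b.ne', hq0.ne']
    ring
  have hC'pos : 0 < C' := by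
    rw [hC']
    exact div_pos (mul_pos (rpow_pos_of_pos h1b q) (rpow_pos_of_pos hq0 (q-1)))
      (mul_pos (mul_pos h1a (rpow_pos_of_pos hab (q-1))) (rpow_pos_of_pos (by linarith) q))
  have e1 : t1 ^ q = q ^ q * (a - b) ^ q / ((1 - b) ^ q * (q - 1) ^ q) := by
    rw [hT1, Real.div_rpow (mul_nonneg (by linarith) hab.le) (mul_nonneg h1b.le hq0.le),
      Real.mul_rpow (by linarith) hab.le, Real.mul_rpow h1b.le hq0.le]
  have hsub1 : (a - b) ^ (q - 1) = (a - b) ^ q / (a - b) := by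
    rw [Real.rpow_sub hab, Real.rpow_one]
  have hsub2 : (q - 1) ^ (q - 1) = (q - 1) ^ q / (q - 1) := by
    rw [Real.rpow_sub hq0, Real.rpow_one]
  have p1 : (0:ℝ) < (1 - b) ^ q := rpow_pos_of_pos h1b q
  have p2 : (0:ℝ) < (q - 1) ^ q := rpow_pos_of_pos hq0 q
  have p3 : (0:ℝ) < (a - b) ^ q := rpow_pos_of_pos hab q
  have p4 : (0:ℝ) < q ^ q := rpow_pos_of_pos (by linarith) q
  have hval : C' * t1 ^ q = t2 := by
    rw [hC', e1, hsub1, hsub2, hT2]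
    field_simp [h1a.ne', h1b.ne', hq0.ne', hab.ne', p1.ne', p2.ne', p3.ne', p4.ne']
  have hslope : C' * (q * t1 ^ (q - 1)) = (1 - b) / (1 - a) := by
    have hsub3 : t1 ^ (q - 1) = t1 ^ q / t1 := by rw [Real.rpow_sub ht1pos, Real.rpow_one]
    rw [hsub3, show C' * (q * (t1 ^ q / t1)) = q * (C' * t1 ^ q) / t1 by ring, hval, hT2, hT1]
    field_simp [h1a.ne', h1b.ne', hq0.ne', hab.ne']
  have key : ∀ t : ℝ, 0 < t → b + (1 - b) / (1 - a) * (t - a) ≤ C' * t ^ q := by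
    intro t ht
    have htang := tangent_le' hq ht1pos ht.le
    have h6 : C' * (t1 ^ q + q * t1 ^ (q - 1) * (t - t1)) ≤ C' * t ^ q :=
      mul_le_mul_of_nonneg_left htang hC'pos.le
    have h7 : b + (1 - b) / (1 - a) * (t - a)
        = C' * (t1 ^ q + q * t1 ^ (q - 1) * (t - t1)) := by
      have e2 : b + (1 - b) / (1 - a) * (t - a) = t2 + (1 - b) / (1 - a) * (t - t1) := by
        rw [hlink]; ring
      rw [e2, ← hval, ← hslope]; ring
    linarith
  have keyA : b < C' * a ^ q := by
    have htang := tangent_lt' hq ht1pos ha0.le (ne_of_lt ht1a)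
    have h6 : C' * (t1 ^ q + q * t1 ^ (q - 1) * (a - t1)) < C' * a ^ q :=
      (mul_lt_mul_iff_right₀ hC'pos).2 htang
    have h7 : b = C' * (t1 ^ q + q * t1 ^ (q - 1) * (a - t1)) := by
      have e2 : b = t2 + (1 - b) / (1 - a) * (a - t1) := by rw [hlink]; ring
      rw [e2, ← hval, ← hslope]; ring
    linarith
  obtain ⟨s, hs⟩ : ∃ s : ℝ, s = (t1 - a) / (1 - a) := ⟨_, rfl⟩
  have hs0 : 0 < s := by rw [hs]; exact div_pos (by linarith) h1a
  have hs1 : s < 1 := by rw [hs, div_lt_one h1a]; linarith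
  have hmem : (1 - s) • ((a, b) : ℝ × ℝ) + s • ((1, 1) : ℝ × ℝ) = (t1, t2) := by
    simp only [Prod.smul_mk, Prod.mk_add_mk, smul_eq_mul, Prod.mk.injEq]
    constructor
    · rw [hs]; field_simp [h1a.ne']; ring
    · rw [hlink, hs]; field_simp [h1a.ne']; ring
  have hvalue : t2 / t1 ^ q = C' := by
    rw [div_eq_iff (rpow_pos_of_pos ht1pos q).ne']
    exact hval.symm
  refine ⟨⟨⟨(t1, t2), ?_, hvalue⟩, ?_⟩, ⟨(t1, t2), ?_, hvalue⟩, ?_⟩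
  · exact ⟨1 - s, s, by linarith, hs0.le, by ring, hmem⟩
  · rintro v ⟨p, ⟨u, w, hu, hw, huw, hp⟩, rfl⟩
    have hu' : u = 1 - w := by linarith
    have hp1 : p.1 = (1 - w) * a + w := by rw [← hp, hu']; simp
    have hp2 : p.2 = (1 - w) * b + w := by rw [← hp, hu']; simp
    have hppos : 0 < p.1 := by
      rw [hp1]
      have hwa : 0 ≤ w * (1 - a) := mul_nonneg hw (by linarith)
      linarith [hwa, ha0]
    have hline : p.2 = b + (1 - b) / (1 - a) * (p.1 - a) := by
      rw [hp1, hp2]; field_simp [h1a.ne']; ring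
    show p.2 / p.1 ^ q ≤ C'
    rw [div_le_iff₀ (rpow_pos_of_pos hppos q), hline]
    exact key p.1 hppos
  · exact ⟨1 - s, s, by linarith, hs0, by ring, hmem⟩
  · have hCb : C = b / a ^ q := by rw [hb]; field_simp [haq.ne']
    rw [hCb, div_lt_iff₀ haq]
    exact keyA
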